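/- Let j ≥ 1 be an integer and let t, u be complex numbers with |t| < 1 and |u| < 1. Then the double series below converges absolutely and ∑_{j'=j}^{∞} (-1)^{j'-j} ∑_{r=1}^{∞} ( t^{(2r-1)²} - t^{(2r+1)²} ) · ( u^{(2r-2j'-1)²} - u^{(2r+2j'+1)²} ) = ∑_{(j₁,j₂)} ( t^{(2j₁-1)²} - t^{(2j₁+1)²} ) · ( u^{(2j₂-1)²} - u^{(2j₂+1)²} ), where the right-hand sum runs over all pairs of integers j₁, j₂ ≥ 1 satisfying |j₁-j₂| + 1 ≤ j, j₁ + j₂ - 1 ≥ j, and j₁ + j₂ - j odd; every exponent is the square of an integer. -/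

import Mathlib

/-- `K_{r,1}(t) · K̄_{r,2j'+1}(u)` after multiplying by eta factors and substituting
`q = t⁸`, `q̄ = u⁸`. -/
def KKterm (t u : ℂ) (j' r : ℤ) : ℂ :=
  (t ^ ((2 * r - 1) ^ 2).toNat - t ^ ((2 * r + 1) ^ 2).toNat) *
    (u ^ ((2 * r - 2 * j' - 1) ^ 2).toNat - u ^ ((2 * r + 2 * j' + 1) ^ 2).toNat)

/-- `χ_{j₁,1}(t) · χ̄_{j₂,1}(u)` after the same substitution. -/
def chiChiTerm (t u : ℂ) (j₁ j₂ : ℤ) : ℂ :=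
  (t ^ ((2 * j₁ - 1) ^ 2).toNat - t ^ ((2 * j₁ + 1) ^ 2).toNat) *
    (u ^ ((2 * j₂ - 1) ^ 2).toNat - u ^ ((2 * j₂ + 1) ^ 2).toNat)

namespace VirAux

/-- The basic building block: `χ_{r,1}`-type factor. -/
noncomputable def aT (t : ℂ) (r : ℤ) : ℂ :=
  t ^ ((2 * r - 1) ^ 2).toNat - t ^ ((2 * r + 1) ^ 2).toNat

/-- product of two `aT` factors -/
noncomputable def Tf (t u : ℂ) (p : ℤ × ℤ) : ℂ := aT t p.1 * aT u p.2

lemma aT_neg (t : ℂ) (k : ℤ) : aT t (-k) = - aT t k := by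
  unfold aT
  have h1 : ((2 * (-k) - 1) ^ 2).toNat = ((2 * k + 1) ^ 2).toNat := by
    congr 1; ring
  have h2 : ((2 * (-k) + 1) ^ 2).toNat = ((2 * k - 1) ^ 2).toNat := by
    congr 1; ring
  rw [h1, h2]; ring

section bounds

variable {t u : ℂ} {v : ℝ}

lemma diff_mul_diff_bound (hv0 : 0 ≤ v) (hv1 : v < 1) (htv : ‖t‖ ≤ v) (huv : ‖u‖ ≤ v)
    (a1 a2 b1 b2 : ℤ) (n : ℕ)
    (h11 : (n : ℤ) ≤ a1 + b1) (h12 : (n : ℤ) ≤ a1 + b2)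
    (h21 : (n : ℤ) ≤ a2 + b1) (h22 : (n : ℤ) ≤ a2 + b2)
    (ha1 : 0 ≤ a1) (ha2 : 0 ≤ a2) (hb1 : 0 ≤ b1) (hb2 : 0 ≤ b2) :
    ‖(t ^ a1.toNat - t ^ a2.toNat) * (u ^ b1.toNat - u ^ b2.toNat)‖ ≤ 4 * v ^ n := by
  have key : ∀ (a b : ℤ), 0 ≤ a → 0 ≤ b → (n : ℤ) ≤ a + b →
      ‖t ^ a.toNat‖ * ‖u ^ b.toNat‖ ≤ v ^ n := by
    intro a b ha hb hab
    have h1 : ‖t ^ a.toNat‖ ≤ v ^ a.toNat := by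
      rw [norm_pow]; exact pow_le_pow_left₀ (norm_nonneg _) htv _
    have h2 : ‖u ^ b.toNat‖ ≤ v ^ b.toNat := by
      rw [norm_pow]; exact pow_le_pow_left₀ (norm_nonneg _) huv _
    calc ‖t ^ a.toNat‖ * ‖u ^ b.toNat‖ ≤ v ^ a.toNat * v ^ b.toNat :=
          mul_le_mul h1 h2 (norm_nonneg _) (pow_nonneg hv0 _)
      _ = v ^ (a.toNat + b.toNat) := (pow_add v _ _).symm
      _ ≤ v ^ n := pow_le_pow_of_le_one hv0 hv1.le (by omega)
  calc ‖(t ^ a1.toNat - t ^ a2.toNat) * (u ^ b1.toNat - u ^ b2.toNat)‖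
      = ‖t ^ a1.toNat - t ^ a2.toNat‖ * ‖u ^ b1.toNat - u ^ b2.toNat‖ := norm_mul _ _
    _ ≤ (‖t ^ a1.toNat‖ + ‖t ^ a2.toNat‖) * (‖u ^ b1.toNat‖ + ‖u ^ b2.toNat‖) := by
        apply mul_le_mul (norm_sub_le _ _) (norm_sub_le _ _) (norm_nonneg _)
        positivity
    _ = ‖t ^ a1.toNat‖ * ‖u ^ b1.toNat‖ + ‖t ^ a1.toNat‖ * ‖u ^ b2.toNat‖
        + (‖t ^ a2.toNat‖ * ‖u ^ b1.toNat‖ + ‖t ^ a2.toNat‖ * ‖u ^ b2.toNat‖) := by ring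
    _ ≤ v ^ n + v ^ n + (v ^ n + v ^ n) := by
        gcongr <;> [exact key _ _ ha1 hb1 h11; exact key _ _ ha1 hb2 h12;
          exact key _ _ ha2 hb1 h21; exact key _ _ ha2 hb2 h22]
    _ = 4 * v ^ n := by ring

lemma natAbs_le_sq_sub (r : ℤ) : (r.natAbs : ℤ) ≤ (2 * r - 1) ^ 2 := by
  rcases le_or_gt 0 r with h | h
  · rw [Int.natAbs_of_nonneg h]; nlinarith [sq_nonneg (r - 1), sq_nonneg r]
  · rw [Int.ofNat_natAbs_of_nonpos h.le]; nlinarith [sq_nonneg r]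

lemma natAbs_le_sq_add (r : ℤ) : (r.natAbs : ℤ) ≤ (2 * r + 1) ^ 2 := by
  have := natAbs_le_sq_sub (-r)
  simpa [Int.natAbs_neg] using this.trans_eq (by ring)

lemma aT_mul_aT_bound (hv0 : 0 ≤ v) (hv1 : v < 1) (htv : ‖t‖ ≤ v) (huv : ‖u‖ ≤ v)
    (r k : ℤ) : ‖aT t r * aT u k‖ ≤ 4 * v ^ (r.natAbs + k.natAbs) := by
  unfold aT
  have h1 := natAbs_le_sq_sub r
  have h2 := natAbs_le_sq_add r
  have h3 := natAbs_le_sq_sub k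
  have h4 := natAbs_le_sq_add k
  apply diff_mul_diff_bound hv0 hv1 htv huv <;> first
    | positivity
    | (push_cast at h1 h2 h3 h4 ⊢; omega)

lemma self_le_sq {x : ℤ} (h : 0 ≤ x) : x ≤ x ^ 2 := by
  rcases h.eq_or_lt with h' | h'
  · simp [← h']
  · nlinarith

lemma summable_geom_natAbs (hv0 : 0 ≤ v) (hv1 : v < 1) :
    Summable fun n : ℤ => v ^ n.natAbs := by
  apply Summable.of_nat_of_neg
  · exact (summable_geometric_of_lt_one hv0 hv1).congr (by simp)
  · exact (summable_geometric_of_lt_one hv0 hv1).congr (by simp)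

lemma summable_Tf (hv0 : 0 ≤ v) (hv1 : v < 1) (htv : ‖t‖ ≤ v) (huv : ‖u‖ ≤ v) :
    Summable fun p : ℤ × ℤ => ‖Tf t u p‖ := by
  have hm : Summable fun p : ℤ × ℤ => 4 * (v ^ p.1.natAbs * v ^ p.2.natAbs) :=
    (Summable.mul_of_nonneg (summable_geom_natAbs hv0 hv1) (summable_geom_natAbs hv0 hv1)
      (fun n => pow_nonneg hv0 _) (fun n => pow_nonneg hv0 _)).mul_left 4
  apply Summable.of_nonneg_of_le (fun _ => norm_nonneg _) _ hm
  intro p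
  calc ‖Tf t u p‖ ≤ 4 * v ^ (p.1.natAbs + p.2.natAbs) :=
        aT_mul_aT_bound hv0 hv1 htv huv _ _
    _ = 4 * (v ^ p.1.natAbs * v ^ p.2.natAbs) := by rw [pow_add]

lemma kk_norm_bound (hv0 : 0 ≤ v) (hv1 : v < 1) (htv : ‖t‖ ≤ v) (huv : ‖u‖ ≤ v)
    {j : ℤ} (hj : 1 ≤ j) (i s : ℕ) :
    ‖KKterm t u (j + i) ((s : ℤ) + 1)‖ ≤ 4 * v ^ (i + s) := by
  unfold KKterm
  have e1 : (0:ℤ) ≤ 2 * s + 1 := by positivity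
  have e2 : (0:ℤ) ≤ 2 * s + 3 := by positivity
  have q1 : (2*(s:ℤ)+1) ≤ (2*(s:ℤ)+1)^2 := self_le_sq e1
  have q2 : (2*(s:ℤ)+3) ≤ (2*(s:ℤ)+3)^2 := self_le_sq e2
  have hb2 : (2*(s:ℤ)+2*j+2*i+3) ≤ (2*((s:ℤ)+1) + 2*(j+i) + 1)^2 := by
    have := self_le_sq (x := 2*(s:ℤ)+2*j+2*i+3) (by positivity)
    nlinarith
  have hb1 : ∀ n : ℤ, n = (2*((s:ℤ)+1) - 2*(j+i) - 1)^2 →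
      (i:ℤ) + s ≤ (2*(s:ℤ)+1)^2 + n := by
    intro n hn
    rcases le_or_gt (i:ℤ) (s:ℤ) with h | h
    · nlinarith [sq_nonneg (2*((s:ℤ)+1) - 2*(j+i) - 1)]
    · have hB : (2*(j:ℤ)+2*i-2*s-1) ≤ (2*(j:ℤ)+2*i-2*s-1)^2 :=
        self_le_sq (by linarith)
      have hsq : n = (2*(j:ℤ)+2*i-2*s-1)^2 := by rw [hn]; ring
      nlinarith
  apply diff_mul_diff_bound hv0 hv1 htv huv _ _ _ _ (i+s) <;>
    first
      | positivity
      | (push_cast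
         first
           | (have := hb1 _ rfl; nlinarith)
           | nlinarith)

lemma summable_kk (hv0 : 0 ≤ v) (hv1 : v < 1) (htv : ‖t‖ ≤ v) (huv : ‖u‖ ≤ v)
    {j : ℤ} (hj : 1 ≤ j) :
    Summable fun p : ℕ × ℕ => ‖KKterm t u (j + p.1) ((p.2 : ℤ) + 1)‖ := by
  have hm : Summable fun p : ℕ × ℕ => 4 * (v ^ p.1 * v ^ p.2) :=
    (Summable.mul_of_nonneg (summable_geometric_of_lt_one hv0 hv1)
      (summable_geometric_of_lt_one hv0 hv1)
      (fun n => pow_nonneg hv0 _) (fun n => pow_nonneg hv0 _)).mul_left 4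
  apply Summable.of_nonneg_of_le (fun _ => norm_nonneg _) _ hm
  intro p
  calc ‖KKterm t u (j + p.1) ((p.2 : ℤ) + 1)‖ ≤ 4 * v ^ (p.1 + p.2) :=
        kk_norm_bound hv0 hv1 htv huv hj p.1 p.2
    _ = 4 * (v ^ p.1 * v ^ p.2) := by rw [pow_add]

end bounds

/-- the key telescoping step -/
lemma kk_diff (t u : ℂ) (j' r : ℤ) :
    KKterm t u j' r - KKterm t u (j' + 1) r
      = aT t r * aT u (j' + 1 - r) - aT t r * aT u (r + j' + 1) := by
  have h1 : ((2 * (j' + 1 - r) - 1) ^ 2).toNat = ((2 * r - 2 * j' - 1) ^ 2).toNat := by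
    congr 1; ring
  have h2 : ((2 * (j' + 1 - r) + 1) ^ 2).toNat = ((2 * r - 2 * (j' + 1) - 1) ^ 2).toNat := by
    congr 1; ring
  have h3 : ((2 * (r + j' + 1) - 1) ^ 2).toNat = ((2 * r + 2 * j' + 1) ^ 2).toNat := by
    congr 1; ring
  have h4 : ((2 * (r + j' + 1) + 1) ^ 2).toNat = ((2 * r + 2 * (j' + 1) + 1) ^ 2).toNat := by
    congr 1; ring
  unfold KKterm aT
  rw [h1, h2, h3, h4]
  ring

section sets

variable (j : ℤ)

def Vc : Set (ℤ × ℤ) := {p | 1 ≤ p.1 ∧ j + 1 ≤ p.1 + p.2 ∧ Odd (p.1 + p.2 - j)}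

def Vp : Set (ℤ × ℤ) :=
  {p | 1 ≤ p.1 ∧ j + p.2 + 1 ≤ p.1 ∧ j + 1 ≤ p.1 + p.2 ∧ Odd (p.1 + p.2 - j)}

def Vm : Set (ℤ × ℤ) := {p | 1 ≤ p.1 ∧ j + p.1 + 1 ≤ p.2 ∧ Odd (p.1 + p.2 - j)}

def S0 : Set (ℤ × ℤ) :=
  {p | 1 ≤ p.1 ∧ 1 ≤ p.2 ∧ |p.1 - p.2| + 1 ≤ j ∧ j ≤ p.1 + p.2 - 1 ∧ Odd (p.1 + p.2 - j)}

variable {j}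

lemma vc_union (hj : 1 ≤ j) : Vc j = (S0 j ∪ Vp j) ∪ Vm j := by
  ext ⟨x, y⟩
  simp only [Vc, S0, Vp, Vm, Set.mem_setOf_eq, Set.mem_union, Int.odd_iff]
  rcases abs_cases (x - y) with ⟨he, _⟩ | ⟨he, _⟩ <;> rw [he] <;> omega

lemma disj1 (hj : 1 ≤ j) : Disjoint (S0 j) (Vp j) := by
  rw [Set.disjoint_left]
  rintro ⟨x, y⟩ hs hp
  simp only [S0, Vp, Set.mem_setOf_eq] at hs hp
  rcases abs_cases (x - y) with ⟨he, _⟩ | ⟨he, _⟩ <;> rw [he] at hs <;> omega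

lemma disj2 (hj : 1 ≤ j) : Disjoint (S0 j ∪ Vp j) (Vm j) := by
  rw [Set.disjoint_left]
  rintro ⟨x, y⟩ hs hm
  simp only [S0, Vp, Vm, Set.mem_setOf_eq, Set.mem_union] at hs hm
  rcases hs with hs | hs
  · rcases abs_cases (x - y) with ⟨he, _⟩ | ⟨he, _⟩ <;> rw [he] at hs <;> omega
  · omega

lemma vp_symm {x y : ℤ} : (x, -y) ∈ Vp j ↔ (x, y) ∈ Vp j := by
  simp only [Vp, Set.mem_setOf_eq, Int.odd_iff]
  omega

end sets

end VirAux

open VirAux in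
/-- The left-right Virasoro content of the simple Jones–Temperley–Lieb modules
(eq. Fs-Vir-content-gen). -/
theorem virasoro_content_of_JTL_simples (j : ℤ) (hj : 1 ≤ j)
    (t u : ℂ) (ht : ‖t‖ < 1) (hu : ‖u‖ < 1) :
    (Summable fun p : ℕ × ℕ => ‖KKterm t u (j + p.1) ((p.2 : ℤ) + 1)‖) ∧
    (∑' i : ℕ, (-1 : ℂ) ^ i * ∑' s : ℕ, KKterm t u (j + i) ((s : ℤ) + 1)) =
      ∑' p : {p : ℤ × ℤ // 1 ≤ p.1 ∧ 1 ≤ p.2 ∧ |p.1 - p.2| + 1 ≤ j ∧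
          j ≤ p.1 + p.2 - 1 ∧ Odd (p.1 + p.2 - j)},
        chiChiTerm t u p.1.1 p.1.2 := by
  classical
  set v : ℝ := max ‖t‖ ‖u‖ with hvdef
  have htv : ‖t‖ ≤ v := le_max_left _ _
  have huv : ‖u‖ ≤ v := le_max_right _ _
  have hv0 : 0 ≤ v := (norm_nonneg t).trans htv
  have hv1 : v < 1 := max_lt ht hu
  have part1 : Summable fun p : ℕ × ℕ => ‖KKterm t u (j + p.1) ((p.2 : ℤ) + 1)‖ :=
    summable_kk hv0 hv1 htv huv hj
  refine ⟨part1, ?_⟩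
  -- Summability facts
  have hKK : Summable fun p : ℕ × ℕ => KKterm t u (j + p.1) ((p.2 : ℤ) + 1) := part1.of_norm
  have hSi : ∀ i : ℕ, Summable fun s : ℕ => KKterm t u (j + i) ((s : ℤ) + 1) :=
    fun i => hKK.prod_factor i
  have hSin : ∀ i : ℕ, Summable fun s : ℕ => ‖KKterm t u (j + i) ((s : ℤ) + 1)‖ :=
    fun i => part1.prod_factor i
  have hTn : Summable fun p : ℤ × ℤ => ‖Tf t u p‖ := summable_Tf hv0 hv1 htv huv
  have hT : Summable (Tf t u) := hTn.of_norm
  -- the two injections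
  set φ : ℕ × ℕ → ℤ × ℤ := fun p => ((p.2 : ℤ) + 1, j + 2 * p.1 - p.2) with hφdef
  set ψ : ℕ × ℕ → ℤ × ℤ := fun p => ((p.2 : ℤ) + 1, j + 2 * p.1 + p.2 + 2) with hψdef
  have hφinj : Function.Injective φ := by
    intro p q h
    simp only [hφdef, Prod.mk.injEq] at h
    have : p.2 = q.2 := by omega
    have : p.1 = q.1 := by omega
    exact Prod.ext ‹p.1 = q.1› ‹p.2 = q.2›
  have hψinj : Function.Injective ψ := by
    intro p q h
    simp only [hψdef, Prod.mk.injEq] at h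
    have : p.2 = q.2 := by omega
    have : p.1 = q.1 := by omega
    exact Prod.ext ‹p.1 = q.1› ‹p.2 = q.2›
  have hφrange : Set.range φ = Vc j := by
    ext ⟨x, y⟩
    constructor
    · rintro ⟨⟨m, s⟩, h⟩
      simp only [hφdef, Prod.mk.injEq] at h
      obtain ⟨h1, h2⟩ := h
      refine ⟨by omega, by omega, ?_⟩
      refine ⟨m, by omega⟩
    · rintro ⟨h1, h2, k, hk⟩
      refine ⟨(k.toNat, (x - 1).toNat), ?_⟩
      simp only [hφdef, Prod.mk.injEq]
      constructor <;> omega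
  have hψrange : Set.range ψ = Vm j := by
    ext ⟨x, y⟩
    constructor
    · rintro ⟨⟨m, s⟩, h⟩
      simp only [hψdef, Prod.mk.injEq] at h
      obtain ⟨h1, h2⟩ := h
      refine ⟨by omega, by omega, ?_⟩
      refine ⟨m + x, by push_cast at h1 h2 ⊢; omega⟩
    · rintro ⟨h1, h2, k, hk⟩
      refine ⟨((k - x).toNat, (x - 1).toNat), ?_⟩
      simp only [hψdef, Prod.mk.injEq]
      constructor <;> omega
  have hc : Summable fun p : ℕ × ℕ => Tf t u (φ p) := (hT.comp_injective hφinj).congr fun _ => rfl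
  have he : Summable fun p : ℕ × ℕ => Tf t u (ψ p) := (hT.comp_injective hψinj).congr fun _ => rfl
  -- the alternating series
  set S : ℕ → ℂ := fun i => ∑' s : ℕ, KKterm t u (j + i) ((s : ℤ) + 1) with hSdef
  set F : ℕ → ℂ := fun i => (-1 : ℂ) ^ i * S i with hFdef
  have hσ : Summable fun i : ℕ => ∑' s : ℕ, ‖KKterm t u (j + i) ((s : ℤ) + 1)‖ :=
    (part1.hasSum.prod_fiberwise fun i => (hSin i).hasSum).summable
  have hF : Summable F := by
    apply Summable.of_norm_bounded hσ
    intro i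
    rw [hFdef]
    simp only [norm_mul, norm_pow, norm_neg, norm_one, one_pow, one_mul]
    exact norm_tsum_le_tsum_norm (hSin i)
  have hFe : Summable fun m : ℕ => F (2 * m) :=
    hF.comp_injective fun a b h => by omega
  have hFo : Summable fun m : ℕ => F (2 * m + 1) :=
    hF.comp_injective fun a b h => by omega
  -- step 1 : even/odd grouping
  have step1 : (∑' i : ℕ, F i) = ∑' m : ℕ, (F (2 * m) + F (2 * m + 1)) := by
    rw [Summable.tsum_add hFe hFo]
    exact (tsum_even_add_odd hFe hFo).symm
  -- step 2 : termwise telescoping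
  have step2 : ∀ m : ℕ, F (2 * m) + F (2 * m + 1)
      = ∑' s : ℕ, (Tf t u (φ (m, s)) - Tf t u (ψ (m, s))) := by
    intro m
    have hpow : ((-1 : ℂ)) ^ (2 * m) = 1 := by
      rw [pow_mul]; norm_num
    have hpow' : ((-1 : ℂ)) ^ (2 * m + 1) = -1 := by
      rw [pow_add, hpow]; norm_num
    rw [hFdef]
    simp only [hpow, hpow', one_mul, neg_one_mul, hSdef]
    rw [← sub_eq_add_neg, ← Summable.tsum_sub (hSi (2 * m)) (hSi (2 * m + 1))]
    apply tsum_congr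
    intro s
    have hcast1 : (j + ((2 * m : ℕ) : ℤ)) = j + 2 * m := by push_cast; ring
    have hcast2 : (j + ((2 * m + 1 : ℕ) : ℤ)) = (j + 2 * m) + 1 := by push_cast; ring
    rw [hcast1, hcast2, kk_diff t u (j + 2 * m) ((s : ℤ) + 1)]
    have hx : (j + 2 * (m : ℤ) + 1 - ((s : ℤ) + 1)) = j + 2 * m - s := by ring
    have hy : ((s : ℤ) + 1 + (j + 2 * m) + 1) = j + 2 * m + s + 2 := by ring
    rw [hx, hy]
    rfl
  -- step 3 : separate the two absolutely convergent double sums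
  have hcm : Summable fun m : ℕ => ∑' s : ℕ, Tf t u (φ (m, s)) :=
    (hc.hasSum.prod_fiberwise fun m => (hc.prod_factor m).hasSum).summable
  have hem : Summable fun m : ℕ => ∑' s : ℕ, Tf t u (ψ (m, s)) :=
    (he.hasSum.prod_fiberwise fun m => (he.prod_factor m).hasSum).summable
  have step3 : (∑' m : ℕ, (F (2 * m) + F (2 * m + 1)))
      = (∑' p : ℕ × ℕ, Tf t u (φ p)) - ∑' p : ℕ × ℕ, Tf t u (ψ p) := by
    calc ∑' m : ℕ, (F (2 * m) + F (2 * m + 1))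
        = ∑' m : ℕ, ((∑' s : ℕ, Tf t u (φ (m, s))) - ∑' s : ℕ, Tf t u (ψ (m, s))) := by
          apply tsum_congr
          intro m
          rw [step2 m, Summable.tsum_sub (hc.prod_factor m) (he.prod_factor m)]
      _ = (∑' m : ℕ, ∑' s : ℕ, Tf t u (φ (m, s))) - ∑' m : ℕ, ∑' s : ℕ, Tf t u (ψ (m, s)) :=
          Summable.tsum_sub hcm hem
      _ = (∑' p : ℕ × ℕ, Tf t u (φ p)) - ∑' p : ℕ × ℕ, Tf t u (ψ p) := by
          rw [Summable.tsum_prod' hc fun m => hc.prod_factor m,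
            Summable.tsum_prod' he fun m => he.prod_factor m]
  -- step 4 : reindex to indicator sums over ℤ × ℤ
  have reindex : ∀ (χ : ℕ × ℕ → ℤ × ℤ), Function.Injective χ →
      (∑' p : ℕ × ℕ, Tf t u (χ p)) = ∑' q : ℤ × ℤ, (Set.range χ).indicator (Tf t u) q := by
    intro χ hinj
    rw [← hinj.tsum_eq (f := (Set.range χ).indicator (Tf t u)) Set.support_indicator_subset]
    apply tsum_congr
    intro p
    exact (Set.indicator_of_mem (Set.mem_range_self p) _).symm
  -- step 5 : the Vp part sums to zero by antisymmetry
  have step5 : (∑' q : ℤ × ℤ, (Vp j).indicator (Tf t u) q) = 0 := by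
    set g : ℤ × ℤ → ℂ := (Vp j).indicator (Tf t u) with hgdef
    set σ : ℤ × ℤ ≃ ℤ × ℤ := (Equiv.refl ℤ).prodCongr (Equiv.neg ℤ) with hσdef
    have hgneg : ∀ q : ℤ × ℤ, g (σ q) = - g q := by
      rintro ⟨x, y⟩
      have hσq : σ (x, y) = (x, -y) := rfl
      rw [hσq, hgdef]
      by_cases hmem : (x, y) ∈ Vp j
      · rw [Set.indicator_of_mem (vp_symm.mpr hmem), Set.indicator_of_mem hmem]
        show Tf t u (x, -y) = - Tf t u (x, y)
        unfold Tf
        simp only [aT_neg]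
        ring
      · rw [Set.indicator_of_notMem (fun h => hmem (vp_symm.mp h)),
          Set.indicator_of_notMem hmem]
        simp
    have h1 : (∑' q, g q) = ∑' q, g (σ q) := (σ.tsum_eq g).symm
    have h2 : (∑' q, g (σ q)) = - ∑' q, g q := by
      rw [show (fun q => g (σ q)) = fun q => - g q from funext hgneg, tsum_neg]
    have := h1.trans h2
    linear_combination this / 2
  -- step 6 : decompose the Vc indicator sum
  have hind : (Vc j).indicator (Tf t u)
      = (S0 j).indicator (Tf t u) + (Vp j).indicator (Tf t u) + (Vm j).indicator (Tf t u) := by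
    rw [vc_union hj, Set.indicator_union_of_disjoint (disj2 hj),
      Set.indicator_union_of_disjoint (disj1 hj)]
    rfl
  have step6 : (∑' q : ℤ × ℤ, (Vc j).indicator (Tf t u) q)
      = (∑' q : ℤ × ℤ, (S0 j).indicator (Tf t u) q)
        + (∑' q : ℤ × ℤ, (Vp j).indicator (Tf t u) q)
        + ∑' q : ℤ × ℤ, (Vm j).indicator (Tf t u) q := by
    rw [hind]
    simp only [Pi.add_apply]
    rw [Summable.tsum_add ((hT.indicator _).add (hT.indicator _)) (hT.indicator _),
      Summable.tsum_add (hT.indicator _) (hT.indicator _)]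
  -- final assembly
  have hsub : (∑' p : {p : ℤ × ℤ // 1 ≤ p.1 ∧ 1 ≤ p.2 ∧ |p.1 - p.2| + 1 ≤ j ∧
          j ≤ p.1 + p.2 - 1 ∧ Odd (p.1 + p.2 - j)}, chiChiTerm t u p.1.1 p.1.2)
      = ∑' q : ℤ × ℤ, (S0 j).indicator (Tf t u) q := by
    rw [← tsum_subtype (S0 j) (Tf t u)]
    rfl
  calc (∑' i : ℕ, (-1 : ℂ) ^ i * ∑' s : ℕ, KKterm t u (j + i) ((s : ℤ) + 1))
      = ∑' i : ℕ, F i := rfl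
    _ = ∑' m : ℕ, (F (2 * m) + F (2 * m + 1)) := step1
    _ = (∑' p : ℕ × ℕ, Tf t u (φ p)) - ∑' p : ℕ × ℕ, Tf t u (ψ p) := step3
    _ = (∑' q : ℤ × ℤ, (Vc j).indicator (Tf t u) q)
        - ∑' q : ℤ × ℤ, (Vm j).indicator (Tf t u) q := by
        rw [reindex φ hφinj, reindex ψ hψinj, hφrange, hψrange]
    _ = ∑' q : ℤ × ℤ, (S0 j).indicator (Tf t u) q := by
        rw [step6, step5]; ring
    _ = _ := hsub.symm
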